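/- Let E be a finite-dimensional real inner product space (e.g. Euclidean ℝ^n). For x ∈ ℝ^n let V(x) and W(x) be linear subspaces of E, and suppose that the maps x ↦ P_{V(x)} and x ↦ P_{W(x)}, from ℝ^n into the space of continuous linear endomorphisms of E equipped with the operator norm, are Borel measurable, where P_U denotes the orthogonal projection onto a subspace U. Then the map x ↦ P_{V(x) ∩ W(x)}, assigning to x the orthogonal projection onto the intersection V(x) ∩ W(x), is Borel measurable. -/

import Mathlib

open MeasureTheory Filter
open scoped Topology InnerProductSpace

section aux

variable {E : Type*} [NormedAddCommGroup E] [InnerProductSpace ℝ E] [FiniteDimensional ℝ E]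

/-- Orthogonal projection as an endomorphism of `E`. -/
noncomputable abbrev aux15_proj (U : Submodule ℝ E) : E →L[ℝ] E :=
  U.subtypeL.comp (Submodule.orthogonalProjectionOnto U)

lemma aux15_proj_apply_of_mem {U : Submodule ℝ E} {x : E} (hx : x ∈ U) :
    aux15_proj U x = x := by
  simp [aux15_proj, Submodule.starProjection_eq_self_iff.mpr hx]

lemma aux15_inner_proj_self (U : Submodule ℝ E) (x : E) :
    ⟪aux15_proj U x, x⟫_ℝ = ‖aux15_proj U x‖ ^ 2 := by
  have h : ⟪(Submodule.orthogonalProjectionOnto U x : E), x - Submodule.orthogonalProjectionOnto U x⟫_ℝ = 0 := by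
    rw [real_inner_comm]
    exact Submodule.starProjection_inner_eq_zero x _ (Submodule.orthogonalProjectionOnto U x).2
  have : ⟪aux15_proj U x, x⟫_ℝ
      = ⟪(Submodule.orthogonalProjectionOnto U x : E), (Submodule.orthogonalProjectionOnto U x : E)⟫_ℝ
        + ⟪(Submodule.orthogonalProjectionOnto U x : E), x - Submodule.orthogonalProjectionOnto U x⟫_ℝ := by
    rw [← inner_add_right, add_sub_cancel]
    rfl
  rw [this, h, add_zero, real_inner_self_eq_norm_sq]
  rfl

lemma aux15_norm_proj_le (U : Submodule ℝ E) (x : E) :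
    ‖aux15_proj U x‖ ≤ ‖x‖ := by
  simpa [aux15_proj] using
    (Submodule.orthogonalProjectionOnto U).le_opNorm x |>.trans
      (by nlinarith [Submodule.orthogonalProjectionOnto_norm_le U, norm_nonneg x])

/-- The averaged projection operator. -/
noncomputable def aux15_T (V W : Submodule ℝ E) : E →L[ℝ] E :=
  (1 / 2 : ℝ) • (aux15_proj V + aux15_proj W)

lemma aux15_T_isSymmetric (V W : Submodule ℝ E) :
    ((aux15_T V W : E →L[ℝ] E) : E →ₗ[ℝ] E).IsSymmetric := by
  intro x y
  have h1 := Submodule.starProjection_isSymmetric (𝕜 := ℝ) (K := V) x y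
  have h2 := Submodule.starProjection_isSymmetric (𝕜 := ℝ) (K := W) x y
  show ⟪aux15_T V W x, y⟫_ℝ = ⟪x, aux15_T V W y⟫_ℝ
  have hx : aux15_T V W x = (1 / 2 : ℝ) • (aux15_proj V x + aux15_proj W x) := rfl
  have hy : aux15_T V W y = (1 / 2 : ℝ) • (aux15_proj V y + aux15_proj W y) := rfl
  rw [hx, hy, real_inner_smul_left, real_inner_smul_right, inner_add_left, inner_add_right]
  have e1 : ⟪aux15_proj V x, y⟫_ℝ = ⟪x, aux15_proj V y⟫_ℝ := h1
  have e2 : ⟪aux15_proj W x, y⟫_ℝ = ⟪x, aux15_proj W y⟫_ℝ := h2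
  rw [e1, e2]

lemma aux15_T_apply_of_mem {V W : Submodule ℝ E} {x : E} (hx : x ∈ V ⊓ W) :
    aux15_T V W x = x := by
  have h : aux15_T V W x = (1 / 2 : ℝ) • (aux15_proj V x + aux15_proj W x) := rfl
  rw [h, aux15_proj_apply_of_mem hx.1, aux15_proj_apply_of_mem hx.2]
  module

lemma aux15_mem_inf_of_T_eq {V W : Submodule ℝ E} {x : E} (hx : aux15_T V W x = x) :
    x ∈ V ⊓ W := by
  have hsum : ⟪aux15_proj V x, x⟫_ℝ + ⟪aux15_proj W x, x⟫_ℝ = 2 * ‖x‖ ^ 2 := by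
    have : aux15_proj V x + aux15_proj W x = (2 : ℝ) • x := by
      have := congrArg (fun y => (2 : ℝ) • y) hx
      simpa [aux15_T, smul_smul, two_smul] using this
    have h2 := congrArg (fun y => ⟪y, x⟫_ℝ) this
    simpa [inner_add_left, real_inner_smul_left, real_inner_self_eq_norm_sq, mul_comm]
      using h2
  have key : ∀ U : Submodule ℝ E, ⟪aux15_proj U x, x⟫_ℝ = ‖x‖ ^ 2 → x ∈ U := by
    intro U hU
    have hnorm : ‖aux15_proj U x‖ ≤ ‖x‖ := aux15_norm_proj_le U x
    have hself : ⟪aux15_proj U x, x⟫_ℝ = ‖aux15_proj U x‖ ^ 2 := aux15_inner_proj_self U x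
    have heq : x = aux15_proj U x := by
      have hz : ‖x - aux15_proj U x‖ ^ 2 = 0 := by
        rw [norm_sub_sq_real, real_inner_comm, hself]
        nlinarith [hU, hself, hnorm, norm_nonneg x, norm_nonneg (aux15_proj U x)]
      have h0 := pow_eq_zero_iff (n := 2) (by norm_num) |>.mp hz
      rw [norm_eq_zero, sub_eq_zero] at h0
      exact h0
    rw [heq]
    exact (Submodule.orthogonalProjectionOnto U x).2
  have hVle : ⟪aux15_proj V x, x⟫_ℝ ≤ ‖x‖ ^ 2 := by
    rw [aux15_inner_proj_self]
    have := aux15_norm_proj_le V x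
    nlinarith [norm_nonneg (aux15_proj V x)]
  have hWle : ⟪aux15_proj W x, x⟫_ℝ ≤ ‖x‖ ^ 2 := by
    rw [aux15_inner_proj_self]
    have := aux15_norm_proj_le W x
    nlinarith [norm_nonneg (aux15_proj W x)]
  exact ⟨key V (by linarith), key W (by linarith)⟩

lemma aux15_T_pow_apply_of_mem {V W : Submodule ℝ E} {x : E} (hx : x ∈ V ⊓ W) (k : ℕ) :
    ((aux15_T V W) ^ k) x = x := by
  induction k with
  | zero => simp
  | succ k ih => rw [pow_succ, ContinuousLinearMap.mul_apply, aux15_T_apply_of_mem hx, ih]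

lemma aux15_tendsto (V W : Submodule ℝ E) (x : E) :
    Tendsto (fun k => ((aux15_T V W) ^ k) x) atTop (𝓝 (aux15_proj (V ⊓ W) x)) := by
  set T := aux15_T V W with hT
  have hsym : (T : E →ₗ[ℝ] E).IsSymmetric := aux15_T_isSymmetric V W
  set b := hsym.eigenvectorBasis rfl with hb
  set μ := hsym.eigenvalues rfl with hμ
  have happly : ∀ i, T (b i) = μ i • b i := fun i => hsym.apply_eigenvectorBasis rfl i
  have hbnorm : ∀ i, ‖b i‖ = 1 := fun i => b.orthonormal.1 i
  have hval : ∀ i, μ i = ⟪T (b i), b i⟫_ℝ := by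
    intro i
    rw [happly, real_inner_smul_left, real_inner_self_eq_norm_sq, hbnorm]
    ring
  have hμ0 : ∀ i, 0 ≤ μ i := by
    intro i
    rw [hval]
    have h1 := aux15_inner_proj_self V (b i)
    have h2 := aux15_inner_proj_self W (b i)
    have : ⟪T (b i), b i⟫_ℝ
        = (1 / 2 : ℝ) * (⟪aux15_proj V (b i), b i⟫_ℝ + ⟪aux15_proj W (b i), b i⟫_ℝ) := by
      simp [hT, aux15_T, inner_add_left, real_inner_smul_left]
      ring
    rw [this, h1, h2]
    positivity
  have hμ1 : ∀ i, μ i ≤ 1 := by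
    intro i
    rw [hval]
    have h1 := aux15_inner_proj_self V (b i)
    have h2 := aux15_inner_proj_self W (b i)
    have hn1 := aux15_norm_proj_le V (b i)
    have hn2 := aux15_norm_proj_le W (b i)
    have : ⟪T (b i), b i⟫_ℝ
        = (1 / 2 : ℝ) * (⟪aux15_proj V (b i), b i⟫_ℝ + ⟪aux15_proj W (b i), b i⟫_ℝ) := by
      simp [hT, aux15_T, inner_add_left, real_inner_smul_left]
      ring
    rw [this, h1, h2]
    have hb1 : ‖b i‖ = 1 := hbnorm i
    nlinarith [norm_nonneg (aux15_proj V (b i)), norm_nonneg (aux15_proj W (b i))]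
  have hmem : ∀ i, μ i = 1 → b i ∈ V ⊓ W := by
    intro i hi
    apply aux15_mem_inf_of_T_eq (V := V) (W := W)
    rw [happly, hi, one_smul]
  set u := aux15_proj (V ⊓ W) x with hu
  set w := x - u with hw
  have humem : u ∈ V ⊓ W := (Submodule.orthogonalProjectionOnto (V ⊓ W) x).2
  have hworth : w ∈ (V ⊓ W)ᗮ := Submodule.sub_starProjection_mem_orthogonal x
  have hTkb : ∀ i k, (T ^ k) (b i) = (μ i) ^ k • b i := by
    intro i k
    induction k with
    | zero => simp
    | succ k ih =>
        rw [pow_succ, ContinuousLinearMap.mul_apply, happly, (T ^ k).map_smul, ih, smul_smul,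
          pow_succ, mul_comm]
  have hTkw : ∀ k, (T ^ k) w = ∑ i, (μ i) ^ k • (⟪b i, w⟫_ℝ • b i) := by
    intro k
    conv_lhs => rw [← b.sum_repr' w]
    rw [map_sum]
    refine Finset.sum_congr rfl fun i _ => ?_
    rw [(T ^ k).map_smul, hTkb, smul_comm]
  have hwlim : Tendsto (fun k => (T ^ k) w) atTop (𝓝 0) := by
    have : Tendsto (fun k => ∑ i, (μ i) ^ k • (⟪b i, w⟫_ℝ • b i)) atTop
        (𝓝 (∑ i : Fin (Module.finrank ℝ E), (0 : E))) := by
      apply tendsto_finset_sum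
      intro i _
      by_cases hi : μ i = 1
      · have : ⟪b i, w⟫_ℝ = 0 := hworth (b i) (hmem i hi)
        simp [this]
      · have hlt : μ i < 1 := lt_of_le_of_ne (hμ1 i) hi
        have := (tendsto_pow_atTop_nhds_zero_of_lt_one (hμ0 i) hlt).smul_const
          (⟪b i, w⟫_ℝ • b i)
        simpa using this
    have heq : (fun k => (T ^ k) w) = fun k => ∑ i, (μ i) ^ k • (⟪b i, w⟫_ℝ • b i) :=
      funext hTkw
    rw [heq]
    simpa using this
  have hx : x = u + w := by rw [hw]; abel
  have : (fun k => (T ^ k) x) = fun k => u + (T ^ k) w := by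
    funext k
    rw [hx, map_add, aux15_T_pow_apply_of_mem humem]
  rw [this]
  simpa using (tendsto_const_nhds.add hwlim : Tendsto (fun k => u + (T ^ k) w) atTop (𝓝 (u + 0)))

lemma aux15_tendsto_opNorm {A : ℕ → E →L[ℝ] E} {B : E →L[ℝ] E}
    (h : ∀ v, Tendsto (fun k => A k v) atTop (𝓝 (B v))) :
    Tendsto A atTop (𝓝 B) := by
  rw [tendsto_iff_norm_sub_tendsto_zero]
  set e := stdOrthonormalBasis ℝ E with he
  have hb : ∀ k, ‖A k - B‖ ≤ ∑ i, ‖(A k - B) (e i)‖ := by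
    intro k
    apply ContinuousLinearMap.opNorm_le_bound _ (Finset.sum_nonneg fun i _ => norm_nonneg _)
    intro v
    have hv : (A k - B) v = ∑ i, ⟪e i, v⟫_ℝ • (A k - B) (e i) := by
      conv_lhs => rw [← e.sum_repr' v]
      rw [map_sum]
      exact Finset.sum_congr rfl fun i _ => by rw [(A k - B).map_smul]
    rw [hv, Finset.sum_mul]
    refine (norm_sum_le _ _).trans (Finset.sum_le_sum fun i _ => ?_)
    rw [norm_smul]
    have : ‖⟪e i, v⟫_ℝ‖ ≤ ‖v‖ := by
      have := abs_real_inner_le_norm (e i) v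
      simpa [e.orthonormal.1 i] using this
    calc ‖⟪e i, v⟫_ℝ‖ * ‖(A k - B) (e i)‖ ≤ ‖v‖ * ‖(A k - B) (e i)‖ :=
          mul_le_mul_of_nonneg_right this (norm_nonneg _)
      _ = ‖(A k - B) (e i)‖ * ‖v‖ := mul_comm _ _
  have hsum : Tendsto (fun k => ∑ i, ‖(A k - B) (e i)‖) atTop
      (𝓝 (∑ i : Fin (Module.finrank ℝ E), (0 : ℝ))) := by
    apply tendsto_finset_sum
    intro i _
    have := (tendsto_iff_norm_sub_tendsto_zero).mp (h (e i))
    simpa [ContinuousLinearMap.sub_apply] using this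
  simp only [Finset.sum_const_zero] at hsum
  exact squeeze_zero (fun k => norm_nonneg _) hb hsum

end aux

/-- Borel measurability of the intersection of two Borel distributions of subspaces:
if the fields of orthogonal projections onto `V(x)` and `W(x)` are Borel measurable (as maps
into the endomorphisms of `E` with the operator norm), so is the field of orthogonal
projections onto `V(x) ∩ W(x)`. -/
theorem stmt_15 {n : ℕ} {E : Type*} [NormedAddCommGroup E] [InnerProductSpace ℝ E]
    [FiniteDimensional ℝ E]
    (V W : EuclideanSpace ℝ (Fin n) → Submodule ℝ E)
    (hV : Measurable fun x => (V x).subtypeL.comp (Submodule.orthogonalProjectionOnto (V x)))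
    (hW : Measurable fun x => (W x).subtypeL.comp (Submodule.orthogonalProjectionOnto (W x))) :
    Measurable fun x => (V x ⊓ W x).subtypeL.comp (Submodule.orthogonalProjectionOnto (V x ⊓ W x)) := by
  have hT : Measurable fun x => aux15_T (V x) (W x) := by
    unfold aux15_T
    exact (hV.add hW).const_smul (1 / 2 : ℝ)
  have hf : ∀ k : ℕ, Measurable fun x => (aux15_T (V x) (W x)) ^ k := fun k =>
    ((continuous_pow k).measurable).comp hT
  apply measurable_of_tendsto_metrizable' atTop hf
  rw [tendsto_pi_nhds]
  intro x
  exact aux15_tendsto_opNorm (fun v => aux15_tendsto (V x) (W x) v)
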